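/- Let (E,d) and (X,δ) be compact metric spaces and φ : E → E, ψ : X → X continuous maps such that (E,φ) has a contracting fibered structure over (X,ψ). Then C(φ) = C(ψ). -/

import Mathlib

open Filter Set Metric
open scoped ENNReal NNReal Topology

/-- The dynamical distance of order `n` associated with the map `φ`:
`d_n^φ(x,y) = max_{0 ≤ k ≤ n-1} d(φ^k x, φ^k y)`. -/
noncomputable def dynDist {X : Type*} [MetricSpace X] (φ : X → X) (n : ℕ) (x y : X) : ℝ :=
  ⨆ k : Fin n, dist (φ^[(k : ℕ)] x) (φ^[(k : ℕ)] y)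

/-- The open `(n,ε)`-ball centered at `x` for the dynamical distance `d_n^φ`. -/
def dynBall {X : Type*} [MetricSpace X] (φ : X → X) (n : ℕ) (x : X) (ε : ℝ) : Set X :=
  {y | dynDist φ n x y < ε}

/-- `G_n(Y,ε)`: the minimal number of `(n,ε)`-balls (centers anywhere in `X`)
needed to cover `Y`. -/
noncomputable def coverNum {X : Type*} [MetricSpace X] (φ : X → X) (n : ℕ) (Y : Set X)
    (ε : ℝ) : ℕ :=
  sInf {m : ℕ | ∃ t : Finset X, t.card = m ∧ Y ⊆ ⋃ x ∈ t, dynBall φ n x ε}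

/-- The (upper) complexity index `C(φ,Y) = sup_{ε>0} limsup_n log G_n(Y,ε) / log n`. -/
noncomputable def upperComplexity {X : Type*} [MetricSpace X] (φ : X → X) (Y : Set X) : ℝ≥0∞ :=
  ⨆ (ε : ℝ) (_ : 0 < ε),
    Filter.limsup
      (fun n : ℕ => ENNReal.ofReal (Real.log (coverNum φ n Y ε) / Real.log n)) Filter.atTop

/-- The lower complexity index `C̲(φ,Y) = sup_{ε>0} liminf_n log G_n(Y,ε) / log n`. -/
noncomputable def lowerComplexity {X : Type*} [MetricSpace X] (φ : X → X) (Y : Set X) : ℝ≥0∞ :=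
  ⨆ (ε : ℝ) (_ : 0 < ε),
    Filter.liminf
      (fun n : ℕ => ENNReal.ofReal (Real.log (coverNum φ n Y ε) / Real.log n)) Filter.atTop

/-- The weight `M(C,s) = Σ_i (1/n_i)^s` of a (countable) family of dynamical balls, the
family being encoded as a set of pairs `(center, order)`. -/
noncomputable def coverWeight {X : Type*} [MetricSpace X] (s : ℝ) (S : Set (X × ℕ)) : ℝ≥0∞ :=
  ∑' p : S, ((p : X × ℕ).2 : ℝ≥0∞)⁻¹ ^ s

/-- A covering of `Y` of order `≥ N` at scale `ε`: a countable family of `(n_i,ε)`-balls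
with all `n_i ≥ N` whose union contains `Y`. -/
def IsDynCover {X : Type*} [MetricSpace X] (φ : X → X) (Y : Set X) (ε : ℝ) (N : ℕ)
    (S : Set (X × ℕ)) : Prop :=
  S.Countable ∧ (∀ p ∈ S, N ≤ p.2) ∧ Y ⊆ ⋃ p ∈ S, dynBall φ p.2 p.1 ε

/-- `δ(Y,ε,s,N)`: the infimum of the weights of coverings of `Y` of order `≥ N`. -/
noncomputable def dynDelta {X : Type*} [MetricSpace X] (φ : X → X) (Y : Set X) (ε s : ℝ)
    (N : ℕ) : ℝ≥0∞ :=
  ⨅ (S : Set (X × ℕ)) (_ : IsDynCover φ Y ε N S), coverWeight s S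

/-- `Δ(Y,ε,s) = sup_{N ≥ 1} δ(Y,ε,s,N)`. -/
noncomputable def dynDeltaSup {X : Type*} [MetricSpace X] (φ : X → X) (Y : Set X)
    (ε s : ℝ) : ℝ≥0∞ :=
  ⨆ (N : ℕ) (_ : 1 ≤ N), dynDelta φ Y ε s N

/-- The critical value `s_c(Y,ε) = inf {s ≥ 0 | Δ(Y,ε,s) = 0}`, as an element of `[0,∞]`
(with `inf ∅ = +∞`). -/
noncomputable def critVal {X : Type*} [MetricSpace X] (φ : X → X) (Y : Set X) (ε : ℝ) : ℝ≥0∞ :=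
  sInf {c : ℝ≥0∞ | ∃ s : ℝ, 0 ≤ s ∧ c = ENNReal.ofReal s ∧ dynDeltaSup φ Y ε s = 0}

/-- The weak complexity index `C*(φ,Y) = sup_{ε>0} s_c(Y,ε)`. -/
noncomputable def weakComplexity {X : Type*} [MetricSpace X] (φ : X → X) (Y : Set X) : ℝ≥0∞ :=
  ⨆ (ε : ℝ) (_ : 0 < ε), critVal φ Y ε

section AuxLemmas

variable {Y : Type*} [MetricSpace Y]

lemma dynDist_zero (φ : Y → Y) (x y : Y) : dynDist φ 0 x y = 0 := by
  rw [dynDist, iSup, Set.range_eq_empty, Real.sSup_empty]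

lemma dist_le_dynDist {φ : Y → Y} {n k : ℕ} (hk : k < n) (x y : Y) :
    dist (φ^[k] x) (φ^[k] y) ≤ dynDist φ n x y := by
  rw [dynDist]
  exact le_ciSup (f := fun k : Fin n => dist (φ^[(k : ℕ)] x) (φ^[(k : ℕ)] y))
    (Set.Finite.bddAbove (Set.finite_range _)) ⟨k, hk⟩

lemma dynDist_le {φ : Y → Y} {n : ℕ} {x y : Y} {c : ℝ} (hc : 0 ≤ c)
    (h : ∀ k < n, dist (φ^[k] x) (φ^[k] y) ≤ c) : dynDist φ n x y ≤ c := by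
  rcases Nat.eq_zero_or_pos n with rfl | hn
  · rw [dynDist_zero]; exact hc
  · haveI : Nonempty (Fin n) := ⟨⟨0, hn⟩⟩
    exact ciSup_le fun k => h k k.2

lemma coverNum_le_card {φ : Y → Y} {n : ℕ} {S : Set Y} {ε : ℝ} {t : Finset Y}
    (h : S ⊆ ⋃ x ∈ t, dynBall φ n x ε) : coverNum φ n S ε ≤ t.card :=
  Nat.sInf_le ⟨t, rfl, h⟩

lemma exists_dynCover [CompactSpace Y] {φ : Y → Y} (hφ : Continuous φ) (n : ℕ) {ε : ℝ}
    (hε : 0 < ε) : ∃ t : Finset Y, (Set.univ : Set Y) ⊆ ⋃ x ∈ t, dynBall φ n x ε := by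
  have hΦ : Continuous (fun x : Y => fun k : Fin n => φ^[(k : ℕ)] x) :=
    continuous_pi fun k => hφ.iterate _
  have hu : UniformContinuous (fun x : Y => fun k : Fin n => φ^[(k : ℕ)] x) :=
    CompactSpace.uniformContinuous_of_continuous hΦ
  obtain ⟨δ, hδ, hδ'⟩ := (Metric.uniformContinuous_iff (α := Y) (β := Fin n → Y)).1 hu
    (ε / 2) (half_pos hε)
  obtain ⟨s, -, hsfin, hscov⟩ := finite_cover_balls_of_compact (X := Y) isCompact_univ hδ
  refine ⟨hsfin.toFinset, fun y _ => ?_⟩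
  obtain ⟨x, hx, hyx⟩ := Set.mem_iUnion₂.1 (hscov (Set.mem_univ y))
  refine Set.mem_iUnion₂.2 ⟨x, hsfin.mem_toFinset.2 hx, ?_⟩
  show dynDist φ n x y < ε
  refine lt_of_le_of_lt (dynDist_le (half_pos hε).le fun k hk => ?_) (half_lt_self hε)
  have hxy : dist x y < δ := by rw [dist_comm]; exact Metric.mem_ball.1 hyx
  exact le_trans (dist_le_pi_dist (fun k : Fin n => φ^[(k : ℕ)] x)
    (fun k : Fin n => φ^[(k : ℕ)] y) ⟨k, hk⟩) (hδ' hxy).le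

lemma exists_min_dynCover [CompactSpace Y] {φ : Y → Y} (hφ : Continuous φ) (n : ℕ) {ε : ℝ}
    (hε : 0 < ε) : ∃ t : Finset Y, t.card = coverNum φ n Set.univ ε ∧
      (Set.univ : Set Y) ⊆ ⋃ x ∈ t, dynBall φ n x ε := by
  obtain ⟨t0, ht0⟩ := exists_dynCover hφ n hε
  have hne : {k : ℕ | ∃ t : Finset Y, t.card = k ∧
      (Set.univ : Set Y) ⊆ ⋃ x ∈ t, dynBall φ n x ε}.Nonempty := ⟨t0.card, t0, rfl, ht0⟩
  obtain ⟨t, h1, h2⟩ := Nat.sInf_mem hne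
  exact ⟨t, h1, h2⟩

lemma upperComplexity_of_isEmpty [IsEmpty Y] (φ : Y → Y) :
    upperComplexity φ Set.univ = 0 := by
  have h : ∀ n (ε : ℝ), coverNum φ n Set.univ ε = 0 := by
    intro n ε
    refine le_antisymm ?_ (Nat.zero_le _)
    refine coverNum_le_card (t := (∅ : Finset Y)) ?_ |>.trans (by simp)
    simp [Set.univ_eq_empty_iff.2 ‹IsEmpty Y›]
  simp [upperComplexity, h]

lemma limsup_log_div_log_le {G H : ℕ → ℕ} {K : ℕ} (hK : 1 ≤ K)
    (h : ∀ n, G n ≤ K * H n) :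
    Filter.limsup (fun n : ℕ => ENNReal.ofReal (Real.log (G n) / Real.log n)) Filter.atTop ≤
    Filter.limsup (fun n : ℕ => ENNReal.ofReal (Real.log (H n) / Real.log n)) Filter.atTop := by
  set g : ℕ → ℝ≥0∞ := fun n => ENNReal.ofReal (Real.log (H n) / Real.log n) with hg
  refine ENNReal.le_of_forall_pos_le_add fun η hη _ => ?_
  have htend : Filter.Tendsto (fun n : ℕ => Real.log K / Real.log n) Filter.atTop (nhds 0) :=
    Filter.Tendsto.div_atTop tendsto_const_nhds
      (Real.tendsto_log_atTop.comp tendsto_natCast_atTop_atTop)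
  have hev : ∀ᶠ n : ℕ in Filter.atTop, Real.log K / Real.log n < (η : ℝ) :=
    htend.eventually_lt_const (by exact_mod_cast hη)
  have hmain : ∀ᶠ n : ℕ in Filter.atTop,
      ENNReal.ofReal (Real.log (G n) / Real.log n) ≤ (η : ℝ≥0∞) + g n := by
    filter_upwards [hev, Filter.eventually_ge_atTop 2] with n hn h2
    have hlogn : (0 : ℝ) < Real.log n :=
      Real.log_pos (by exact_mod_cast Nat.lt_of_lt_of_le Nat.one_lt_two h2)
    rcases Nat.eq_zero_or_pos (G n) with hG | hG
    · simp [hG]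
    · have hH : 0 < H n := by
        rcases Nat.eq_zero_or_pos (H n) with hH | hH
        · exfalso; have hh := h n; rw [hH, mul_zero] at hh; omega
        · exact hH
      have hlog : Real.log (G n) ≤ Real.log K + Real.log (H n) := by
        rw [← Real.log_mul (by positivity) (by positivity)]
        exact Real.log_le_log (by exact_mod_cast hG) (by exact_mod_cast h n)
      have hdiv : Real.log (G n) / Real.log n ≤
          (η : ℝ) + Real.log (H n) / Real.log n := by
        have h1 : Real.log (G n) / Real.log n ≤
            Real.log K / Real.log n + Real.log (H n) / Real.log n := by
          rw [← add_div]; gcongr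
        exact h1.trans (add_le_add hn.le le_rfl)
      calc ENNReal.ofReal (Real.log (G n) / Real.log n)
          ≤ ENNReal.ofReal ((η : ℝ) + Real.log (H n) / Real.log n) :=
            ENNReal.ofReal_le_ofReal hdiv
        _ ≤ ENNReal.ofReal (η : ℝ) + ENNReal.ofReal (Real.log (H n) / Real.log n) :=
            ENNReal.ofReal_add_le
        _ = (η : ℝ≥0∞) + g n := by rw [ENNReal.ofReal_coe_nnreal]
  have hbdd : Filter.IsBoundedUnder (· ≤ ·) (Filter.atTop : Filter ℕ) g :=
    ⟨⊤, Filter.eventually_map.2 (Filter.Eventually.of_forall fun _ => le_top)⟩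
  have hcobdd : Filter.IsCoboundedUnder (· ≤ ·) (Filter.atTop : Filter ℕ) g :=
    ⟨⊥, fun a _ => bot_le⟩
  calc Filter.limsup (fun n : ℕ => ENNReal.ofReal (Real.log (G n) / Real.log n)) Filter.atTop
      ≤ Filter.limsup (fun n => (η : ℝ≥0∞) + g n) Filter.atTop := limsup_le_limsup hmain
    _ = (η : ℝ≥0∞) + Filter.limsup g Filter.atTop :=
        limsup_const_add Filter.atTop g (η : ℝ≥0∞) hbdd hcobdd
    _ = Filter.limsup g Filter.atTop + (η : ℝ≥0∞) := add_comm _ _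

lemma upperComplexity_le_of_coverNum {Y Z : Type*} [MetricSpace Y] [MetricSpace Z]
    {φ : Y → Y} {ψ : Z → Z}
    (h : ∀ ε : ℝ, 0 < ε → ∃ δ : ℝ, 0 < δ ∧ ∃ K : ℕ, 1 ≤ K ∧
      ∀ n, coverNum φ n Set.univ ε ≤ K * coverNum ψ n Set.univ δ) :
    upperComplexity φ Set.univ ≤ upperComplexity ψ Set.univ := by
  refine iSup₂_le fun ε hε => ?_
  obtain ⟨δ, hδ, K, hK, hb⟩ := h ε hε
  refine (limsup_log_div_log_le hK hb).trans ?_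
  exact le_iSup₂ (f := fun (δ : ℝ) (_ : 0 < δ) => Filter.limsup
    (fun n : ℕ => ENNReal.ofReal (Real.log (coverNum ψ n Set.univ δ) / Real.log n))
    Filter.atTop) δ hδ

end AuxLemmas

/-- if `(E,φ)` has a contracting fibered structure over `(X,ψ)`, then
`C(φ) = C(ψ)`. The structure consists of: a continuous surjection `π : E → X` with
`ψ ∘ π = π ∘ φ`, a metric space fiber `F`, a finite open covering `(U i)` of `X`, and
isometric trivializations `π⁻¹(U i) ≃ᵢ U i × F` over `π`, such that the fiber components
are (weakly) contracted by `φ`. -/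
theorem contractingFibered_upperComplexity_eq {E X F : Type*}
    [MetricSpace E] [CompactSpace E] [MetricSpace X] [CompactSpace X] [MetricSpace F]
    (φ : E → E) (hφ : Continuous φ) (ψ : X → X) (hψ : Continuous ψ)
    (π : E → X) (hπc : Continuous π) (hπs : Function.Surjective π)
    (hfactor : ψ ∘ π = π ∘ φ)
    (m : ℕ) (U : Fin m → Set X) (hUopen : ∀ i, IsOpen (U i)) (hUcover : ⋃ i, U i = Set.univ)
    (triv : ∀ i : Fin m, IsometryEquiv ↥(π ⁻¹' (U i)) (↥(U i) × F))
    (htriv : ∀ (i : Fin m) (z : ↥(π ⁻¹' (U i))), ((triv i z).1 : X) = π (z : E))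
    (hcontract : ∀ (i j : Fin m) (z z' : E) (hz : z ∈ π ⁻¹' (U i)) (hz' : z' ∈ π ⁻¹' (U i))
      (hfz : φ z ∈ π ⁻¹' (U j)) (hfz' : φ z' ∈ π ⁻¹' (U j)),
      dist (triv j ⟨φ z, hfz⟩).2 (triv j ⟨φ z', hfz'⟩).2
        ≤ dist (triv i ⟨z, hz⟩).2 (triv i ⟨z', hz'⟩).2) :
    upperComplexity φ Set.univ = upperComplexity ψ Set.univ := by
  classical
  have hsc : Function.Semiconj π φ ψ := fun x => (congrFun hfactor x).symm
  have hsemi : ∀ (k : ℕ) (z : E), π (φ^[k] z) = ψ^[k] (π z) := fun k z =>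
    (hsc.iterate_right k) z
  rcases isEmpty_or_nonempty E with hE | hE
  · haveI : IsEmpty X := ⟨fun x => (hπs x).elim fun z _ => IsEmpty.false z⟩
    rw [upperComplexity_of_isEmpty φ, upperComplexity_of_isEmpty ψ]
  · haveI : Nonempty X := ⟨π (Classical.arbitrary E)⟩
    apply le_antisymm
    · -- hard direction : C(φ) ≤ C(ψ)
      refine upperComplexity_le_of_coverNum fun ε0 hε0 => ?_
      obtain ⟨δ0, hδ0, hleb⟩ := lebesgue_number_lemma_of_metric isCompact_univ hUopen
        (by rw [hUcover])
      choose L hL using fun x : X => hleb x (Set.mem_univ x)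
      have hxL : ∀ x : X, x ∈ U (L x) := fun x => hL x (Metric.mem_ball_self hδ0)
      set ε : ℝ := min ε0 δ0 / 2 with hεdef
      have hε : 0 < ε := half_pos (lt_min hε0 hδ0)
      have hεε0 : ε < ε0 :=
        lt_of_le_of_lt (by rw [hεdef]; gcongr; exact min_le_left _ _) (half_lt_self hε0)
      have hεδ0 : ε < δ0 :=
        lt_of_le_of_lt (by rw [hεdef]; gcongr; exact min_le_right _ _) (half_lt_self hδ0)
      -- an ε-net of the fiber F
      set x0 : X := π (Classical.arbitrary E) with hx0
      have hx0mem : x0 ∈ ⋃ i, U i := by rw [hUcover]; trivial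
      obtain ⟨i0, hi0⟩ := Set.mem_iUnion.1 hx0mem
      have hK0 : IsCompact (π ⁻¹' {x0}) := (isClosed_singleton.preimage hπc).isCompact
      obtain ⟨tf, htf_sub, htf_fin, htf_cov⟩ := hK0.finite_cover_balls hε
      set netS : Set F := (fun z : ↥(π ⁻¹' (U i0)) => (triv i0 z).2) ''
        (Subtype.val ⁻¹' tf) with hnetSdef
      have hnetS_fin : netS.Finite :=
        ((htf_fin.preimage (Set.injOn_of_injective Subtype.val_injective)).image _)
      have hnet : ∀ f : F, ∃ f' ∈ netS, dist f f' < ε := by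
        intro f
        set w : ↥(π ⁻¹' (U i0)) := (triv i0).symm (⟨x0, hi0⟩, f) with hw
        have hπw : π (w : E) = x0 := by
          have h1 := htriv i0 w
          rw [hw, IsometryEquiv.apply_symm_apply] at h1
          exact h1.symm
        have hwK0 : (w : E) ∈ π ⁻¹' {x0} := by simp [Set.mem_preimage, hπw]
        obtain ⟨c, hc_t, hc_d⟩ := Set.mem_iUnion₂.1 (htf_cov hwK0)
        have hcK0 : c ∈ π ⁻¹' {x0} := htf_sub hc_t
        have hcU : c ∈ π ⁻¹' (U i0) := by
          have : π c = x0 := hcK0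
          rw [Set.mem_preimage, this]; exact hi0
        refine ⟨(triv i0 ⟨c, hcU⟩).2, ⟨⟨c, hcU⟩, hc_t, rfl⟩, ?_⟩
        have h4 : (triv i0 w).2 = f := by rw [hw, IsometryEquiv.apply_symm_apply]
        have h3 : dist ((triv i0 w).2) ((triv i0 ⟨c, hcU⟩).2) ≤
            dist (triv i0 w) (triv i0 ⟨c, hcU⟩) := by
          rw [Prod.dist_eq]; exact le_max_right _ _
        have h2 : dist (triv i0 w) (triv i0 ⟨c, hcU⟩) = dist (w : E) c := by
          rw [IsometryEquiv.dist_eq, Subtype.dist_eq]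
        rw [← h4]
        exact lt_of_le_of_lt (h3.trans h2.le) (Metric.mem_ball.1 hc_d)
      set netF : Finset F := hnetS_fin.toFinset with hnetFdef
      have hFne : Nonempty F := by
        obtain ⟨z0, hz0⟩ := hπs x0
        exact ⟨(triv i0 ⟨z0, by rw [Set.mem_preimage, hz0]; exact hi0⟩).2⟩
      have hnetF_ne : netF.Nonempty := by
        obtain ⟨f', hf', -⟩ := hnet hFne.some
        exact ⟨f', hnetS_fin.mem_toFinset.2 hf'⟩
      refine ⟨ε, hε, netF.card, hnetF_ne.card_pos, fun n => ?_⟩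
      obtain ⟨t, htcard, htcov⟩ := exists_min_dynCover hψ n hε
      -- the centers
      have hctrmem : ∀ (x : X) (f : F),
          (((triv (L x)).symm (⟨x, hxL x⟩, f) : ↥(π ⁻¹' (U (L x)))) : E) ∈ π ⁻¹' (U (L x)) :=
        fun x f => ((triv (L x)).symm (⟨x, hxL x⟩, f)).2
      set ctr : X → F → E := fun x f =>
        (((triv (L x)).symm (⟨x, hxL x⟩, f) : ↥(π ⁻¹' (U (L x)))) : E) with hctrdef
      have hπctr : ∀ x f, π (ctr x f) = x := by
        intro x f
        have h1 := htriv (L x) ((triv (L x)).symm (⟨x, hxL x⟩, f))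
        rw [IsometryEquiv.apply_symm_apply] at h1
        exact h1.symm
      have hctr2 : ∀ (x : X) (f : F) (h : ctr x f ∈ π ⁻¹' (U (L x))),
          (triv (L x) ⟨ctr x f, h⟩).2 = f := by
        intro x f h
        have he : (⟨ctr x f, h⟩ : ↥(π ⁻¹' (U (L x)))) = (triv (L x)).symm (⟨x, hxL x⟩, f) :=
          Subtype.ext rfl
        rw [he, IsometryEquiv.apply_symm_apply]
      set C : Finset E := (t ×ˢ netF).image (fun p => ctr p.1 p.2) with hCdef
      have hcov : (Set.univ : Set E) ⊆ ⋃ c ∈ C, dynBall φ n c ε0 := by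
        intro z _
        obtain ⟨a, hat, haz⟩ := Set.mem_iUnion₂.1 (htcov (Set.mem_univ (π z)))
        have haz' : dynDist ψ n a (π z) < ε := haz
        rcases Nat.eq_zero_or_pos n with rfl | hn
        · obtain ⟨f', hf'⟩ := hnetF_ne
          have hmem : ctr a f' ∈ C := by
            rw [hCdef]
            exact Finset.mem_image.2 ⟨(a, f'), Finset.mem_product.2 ⟨hat, hf'⟩, rfl⟩
          refine Set.mem_iUnion₂.2 ⟨ctr a f', hmem, ?_⟩
          show dynDist φ 0 _ z < ε0
          rw [dynDist_zero]; exact hε0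
        · have hstep : ∀ k, k < n → dist (ψ^[k] a) (ψ^[k] (π z)) < ε :=
            fun k hk => lt_of_le_of_lt (dist_le_dynDist hk a (π z)) haz'
          have hi : z ∈ π ⁻¹' (U (L a)) := by
            rw [Set.mem_preimage]
            refine hL a ?_
            rw [Metric.mem_ball, dist_comm]
            have := hstep 0 hn
            simpa using this.trans hεδ0
          obtain ⟨f', hf'S, hff'⟩ := hnet ((triv (L a) ⟨z, hi⟩).2)
          have hf' : f' ∈ netF := hnetS_fin.mem_toFinset.2 hf'S
          have hcC : ctr a f' ∈ C := by
            rw [hCdef]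
            exact Finset.mem_image.2 ⟨(a, f'), Finset.mem_product.2 ⟨hat, hf'⟩, rfl⟩
          have hπck : ∀ k : ℕ, π (φ^[k] (ctr a f')) = ψ^[k] a := by
            intro k; rw [hsemi, hπctr]
          have hπzk : ∀ k : ℕ, π (φ^[k] z) = ψ^[k] (π z) := fun k => hsemi k z
          have claim : ∀ k, k < n → ∃ (j : Fin m) (h1 : φ^[k] (ctr a f') ∈ π ⁻¹' (U j))
              (h2 : φ^[k] z ∈ π ⁻¹' (U j)),
              dist (triv j ⟨φ^[k] (ctr a f'), h1⟩).2 (triv j ⟨φ^[k] z, h2⟩).2 < ε := by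
            intro k
            induction k with
            | zero =>
              intro _
              have h1 : ctr a f' ∈ π ⁻¹' (U (L a)) := by
                rw [Set.mem_preimage, hπctr]; exact hxL a
              refine ⟨L a, by simpa using h1, by simpa using hi, ?_⟩
              simp only [Function.iterate_zero_apply]
              rw [hctr2 a f' h1, dist_comm]
              exact hff'
            | succ k ih =>
              intro hk1
              obtain ⟨j, h1, h2, hd⟩ := ih (Nat.lt_of_succ_lt hk1)
              have hc1 : φ^[k + 1] (ctr a f') ∈ π ⁻¹' (U (L (ψ^[k + 1] a))) := by
                rw [Set.mem_preimage, hπck]; exact hxL _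
              have hz1 : φ^[k + 1] z ∈ π ⁻¹' (U (L (ψ^[k + 1] a))) := by
                rw [Set.mem_preimage, hπzk]
                refine hL _ ?_
                rw [Metric.mem_ball, dist_comm]
                exact (hstep _ hk1).trans hεδ0
              refine ⟨L (ψ^[k + 1] a), hc1, hz1, lt_of_le_of_lt ?_ hd⟩
              have hc1' : φ (φ^[k] (ctr a f')) ∈ π ⁻¹' (U (L (ψ^[k + 1] a))) := by
                rw [← Function.iterate_succ_apply' φ k (ctr a f')]; exact hc1
              have hz1' : φ (φ^[k] z) ∈ π ⁻¹' (U (L (ψ^[k + 1] a))) := by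
                rw [← Function.iterate_succ_apply' φ k z]; exact hz1
              have hcon := hcontract j (L (ψ^[k + 1] a)) (φ^[k] (ctr a f')) (φ^[k] z)
                h1 h2 hc1' hz1'
              simp only [Function.iterate_succ_apply']
              exact hcon
          refine Set.mem_iUnion₂.2 ⟨ctr a f', hcC, ?_⟩
          show dynDist φ n (ctr a f') z < ε0
          refine lt_of_le_of_lt (dynDist_le hε.le fun k hk => ?_) hεε0
          obtain ⟨j, h1, h2, hd⟩ := claim k hk
          have hdist_eq : dist (φ^[k] (ctr a f')) (φ^[k] z) =
              dist (triv j ⟨φ^[k] (ctr a f'), h1⟩) (triv j ⟨φ^[k] z, h2⟩) := by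
            rw [IsometryEquiv.dist_eq, Subtype.dist_eq]
          rw [hdist_eq, Prod.dist_eq]
          refine max_le ?_ hd.le
          rw [Subtype.dist_eq, htriv j ⟨φ^[k] (ctr a f'), h1⟩, htriv j ⟨φ^[k] z, h2⟩,
            hπck, hπzk]
          exact (hstep k hk).le
      calc coverNum φ n Set.univ ε0 ≤ C.card := coverNum_le_card hcov
        _ ≤ (t ×ˢ netF).card := by rw [hCdef]; exact Finset.card_image_le
        _ = t.card * netF.card := Finset.card_product _ _
        _ = netF.card * coverNum ψ n Set.univ ε := by rw [htcard, mul_comm]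
    · -- easy direction : C(ψ) ≤ C(φ)
      refine upperComplexity_le_of_coverNum fun ε0 hε0 => ?_
      obtain ⟨η, hη, hη'⟩ := Metric.uniformContinuous_iff.1
        (CompactSpace.uniformContinuous_of_continuous hπc) (ε0 / 2) (half_pos hε0)
      refine ⟨η, hη, 1, le_refl 1, fun n => ?_⟩
      rw [one_mul]
      obtain ⟨t, htcard, htcov⟩ := exists_min_dynCover hφ n hη
      refine le_trans (coverNum_le_card (t := t.image π) ?_)
        (htcard ▸ Finset.card_image_le)
      intro x _
      obtain ⟨z, rfl⟩ := hπs x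
      obtain ⟨w, hwt, hwz⟩ := Set.mem_iUnion₂.1 (htcov (Set.mem_univ z))
      refine Set.mem_iUnion₂.2 ⟨π w, Finset.mem_image_of_mem π hwt, ?_⟩
      show dynDist ψ n (π w) (π z) < ε0
      refine lt_of_le_of_lt (dynDist_le (half_pos hε0).le fun k hk => ?_) (half_lt_self hε0)
      rw [← hsemi k w, ← hsemi k z]
      exact (hη' (lt_of_le_of_lt (dist_le_dynDist hk w z) hwz)).le
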